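/- Let S = {x ∈ ℝⁿ : ‖x‖₀ ≤ s} with s < n and x* ∈ S. Then the Mordukhovich limiting normal cone to S at x* equals {v ∈ ℝⁿ : vᵢ = 0 for all i ∈ supp(x*), and ‖v‖₀ ≤ n − s}. -/

import Mathlib

open Filter Topology Metric Set
open scoped Classical

noncomputable section

abbrev E (n : ℕ) := EuclideanSpace ℝ (Fin n)

/-- Bouligand tangent cone. -/
def bouligand {n : ℕ} (S : Set (E n)) (x : E n) : Set (E n) :=
  {d | ∃ t : ℕ → ℝ, ∃ dk : ℕ → E n,
    (∀ k, 0 < t k) ∧ Tendsto t atTop (𝓝 0) ∧ Tendsto dk atTop (𝓝 d) ∧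
    ∀ k, x + t k • dk k ∈ S}

/-- Fréchet (regular) normal cone. -/
def frechetNormal {n : ℕ} (S : Set (E n)) (x : E n) : Set (E n) :=
  {v | ∀ ε > (0 : ℝ), ∃ δ > (0 : ℝ), ∀ y ∈ S, ‖y - x‖ < δ →
    (inner ℝ v (y - x) : ℝ) ≤ ε * ‖y - x‖}

/-- Mordukhovich (limiting) normal cone. -/
def limitingNormal {n : ℕ} (S : Set (E n)) (x : E n) : Set (E n) :=
  {v | ∃ xk : ℕ → E n, ∃ vk : ℕ → E n,
    (∀ k, xk k ∈ S) ∧ Tendsto xk atTop (𝓝 x) ∧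
    (∀ k, vk k ∈ frechetNormal S (xk k)) ∧ Tendsto vk atTop (𝓝 v)}

/-- Directional limiting normal cone. -/
def dirLimitingNormal {n : ℕ} (S : Set (E n)) (x d : E n) : Set (E n) :=
  {v | ∃ t : ℕ → ℝ, ∃ dk : ℕ → E n, ∃ vk : ℕ → E n,
    (∀ k, 0 < t k) ∧ Tendsto t atTop (𝓝 0) ∧ Tendsto dk atTop (𝓝 d) ∧
    Tendsto vk atTop (𝓝 v) ∧ ∀ k, vk k ∈ frechetNormal S (x + t k • dk k)}

/-- Support of a vector. -/
def supp {n : ℕ} (x : E n) : Finset (Fin n) := Finset.univ.filter (fun i => x i ≠ 0)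

/-- The ℓ₀ "norm": number of nonzero components. -/
def l0 {n : ℕ} (x : E n) : ℕ := (supp x).card

/-- The sparsity set {x : ‖x‖₀ ≤ s}. -/
def sparseSet (n s : ℕ) : Set (E n) := {x | l0 x ≤ s}

/-- Coordinate subspace ℝ_I of vectors supported on I. -/
def coordSub {n : ℕ} (I : Finset (Fin n)) : Set (E n) := {x | ∀ i ∉ I, x i = 0}

lemma mem_supp {n : ℕ} {x : E n} {i : Fin n} : i ∈ supp x ↔ x i ≠ 0 := by
  simp [supp]

lemma abs_apply_le_norm {n : ℕ} (w : E n) (i : Fin n) : |w i| ≤ ‖w‖ := by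
  have h := abs_real_inner_le_norm (EuclideanSpace.single i (1:ℝ)) w
  rw [EuclideanSpace.inner_single_left, EuclideanSpace.norm_single] at h
  simpa using h

lemma supp_add_single_subset {n : ℕ} (y : E n) (i : Fin n) (c : ℝ) :
    supp (y + c • EuclideanSpace.single i (1:ℝ)) ⊆ insert i (supp y) := by
  intro j hj
  rw [mem_supp] at hj
  by_cases hji : j = i
  · simp [hji]
  · rw [Finset.mem_insert, mem_supp]
    right
    intro h0
    apply hj
    have : (c • EuclideanSpace.single i (1:ℝ)) j = 0 := by
      simp [EuclideanSpace.single_apply, hji]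
    simp [h0, this]

/-- Key: if w is Fréchet-normal at y ∈ S, and either i ∈ supp y or l0 y < s, then w i = 0. -/
lemma frechet_coord_zero {n s : ℕ} {y w : E n} (hy : y ∈ sparseSet n s)
    (hw : w ∈ frechetNormal (sparseSet n s) y) {i : Fin n}
    (hi : i ∈ supp y ∨ l0 y < s) : w i = 0 := by
  by_contra hwi
  have hwpos : 0 < |w i| := abs_pos.mpr hwi
  obtain ⟨δ, hδ, H⟩ := hw (|w i| / 2) (by positivity)
  set c : ℝ := (δ / (2 * (|w i| + 1))) * w i with hc
  have hcne : c ≠ 0 := by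
    apply mul_ne_zero _ hwi
    positivity
  set y' : E n := y + c • EuclideanSpace.single i (1:ℝ) with hy'
  have hdiff : y' - y = c • EuclideanSpace.single i (1:ℝ) := by
    rw [hy']; abel
  have hy'S : y' ∈ sparseSet n s := by
    have hsub := supp_add_single_subset y i c
    rcases hi with hi | hi
    · have : insert i (supp y) = supp y := Finset.insert_eq_self.mpr hi
      rw [this] at hsub
      exact le_trans (Finset.card_le_card hsub) hy
    · calc l0 y' ≤ (insert i (supp y)).card := Finset.card_le_card hsub
        _ ≤ (supp y).card + 1 := Finset.card_insert_le _ _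
        _ ≤ s := hi
  have hnorm : ‖y' - y‖ = |c| := by
    rw [hdiff, norm_smul, EuclideanSpace.norm_single]
    simp [Real.norm_eq_abs]
  have hlt : ‖y' - y‖ < δ := by
    rw [hnorm, hc, abs_mul]
    have h1 : |δ / (2 * (|w i| + 1))| = δ / (2 * (|w i| + 1)) := by
      rw [abs_of_pos]; positivity
    rw [h1]
    rw [div_mul_eq_mul_div, div_lt_iff₀ (by positivity)]
    nlinarith [abs_nonneg (w i)]
  have hinner : (inner ℝ w (y' - y) : ℝ) = c * w i := by
    rw [hdiff, real_inner_smul_right, EuclideanSpace.inner_single_right]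
    simp [starRingEnd_apply]
  have := H y' hy'S hlt
  rw [hinner, hnorm, hc] at this
  have hpos : 0 < δ / (2 * (|w i| + 1)) := by positivity
  rw [abs_mul, abs_of_pos hpos] at this
  -- this : (δ/(2(|wi|+1))) * w i * w i ≤ |w i|/2 * ((δ/(2(|wi|+1))) * |w i|)
  have hsq : w i * w i = |w i| * |w i| := (abs_mul_abs_self _).symm
  rw [mul_assoc, hsq] at this
  nlinarith [mul_pos hpos (mul_pos hwpos hwpos)]

lemma frechet_l0_le {n s : ℕ} (hs : s < n) {y w : E n} (hy : y ∈ sparseSet n s)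
    (hw : w ∈ frechetNormal (sparseSet n s) y) : l0 w ≤ n - s := by
  rcases lt_or_eq_of_le (show l0 y ≤ s from hy) with h | h
  · have hzero : ∀ i, w i = 0 := fun i => frechet_coord_zero hy hw (Or.inr h)
    have hsupp : supp w = ∅ := by
      ext i; simp [mem_supp, hzero i]
    simp [l0, hsupp]
  · have hsub : supp w ⊆ (supp y)ᶜ := by
      intro i hi
      rw [Finset.mem_compl]
      intro hiy
      exact absurd (frechet_coord_zero hy hw (Or.inl hiy)) (mem_supp.mp hi)
    calc l0 w ≤ (supp y)ᶜ.card := Finset.card_le_card hsub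
      _ = n - (supp y).card := by rw [Finset.card_compl]; simp
      _ = n - s := by rw [show (supp y).card = s from h]

/-- Key for ⊇: if z has support exactly I with |I| = s, and v vanishes on I,
then v is Fréchet normal at z. -/
lemma frechet_of_supp_eq {n s : ℕ} {z v : E n} {I : Finset (Fin n)}
    (hIcard : I.card = s) (hzI : ∀ i, i ∈ I ↔ z i ≠ 0) (hvI : ∀ i ∈ I, v i = 0) :
    v ∈ frechetNormal (sparseSet n s) z := by
  intro ε hε
  have hzS : ∀ y ∈ sparseSet n s, (∀ i ∈ I, y i ≠ 0) → ∀ i, i ∉ I → y i = 0 := by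
    intro y hy hyI
    have hsub : I ⊆ supp y := fun i hi => mem_supp.mpr (hyI i hi)
    have : supp y = I := (Finset.eq_of_subset_of_card_le hsub
      (by rw [hIcard]; exact hy)).symm
    intro i hiI
    by_contra h0
    exact hiI (this ▸ mem_supp.mpr h0)
  obtain ⟨δ, hδpos, hδ⟩ : ∃ δ > (0:ℝ), ∀ i ∈ I, δ ≤ |z i| := by
    by_cases hI : I.Nonempty
    · refine ⟨I.inf' hI (fun i => |z i|), ?_, fun i hi => Finset.inf'_le _ hi⟩
      rw [gt_iff_lt, Finset.lt_inf'_iff]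
      exact fun i hi => abs_pos.mpr ((hzI i).mp hi)
    · exact ⟨1, one_pos, fun i hi => absurd ⟨i, hi⟩ hI⟩
  refine ⟨δ, hδpos, fun y hy hylt => ?_⟩
  have hyI : ∀ i ∈ I, y i ≠ 0 := by
    intro i hi h0
    have h1 : |y i - z i| ≤ ‖y - z‖ := by
      have := abs_apply_le_norm (y - z) i
      simpa using this
    rw [h0, zero_sub, abs_neg] at h1
    exact absurd (lt_of_le_of_lt (le_trans (hδ i hi) h1) hylt) (lt_irrefl _)
  have hinner : (inner ℝ v (y - z) : ℝ) = 0 := by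
    rw [PiLp.inner_apply]
    apply Finset.sum_eq_zero
    intro i _
    by_cases hi : i ∈ I
    · simp [hvI i hi]
    · have hyi : y i = 0 := hzS y hy hyI i hi
      have hzi : z i = 0 := by
        by_contra h; exact hi ((hzI i).mpr h)
      simp [PiLp.sub_apply, hyi, hzi]
  rw [hinner]
  positivity

lemma tendsto_coord {n : ℕ} {f : ℕ → E n} {x : E n} (h : Tendsto f atTop (𝓝 x))
    (i : Fin n) : Tendsto (fun k => f k i) atTop (𝓝 (x i)) :=
  ((EuclideanSpace.proj i).continuous.tendsto x).comp h

theorem stmt13 {n s : ℕ} (hs : s < n) (x : E n) (hx : x ∈ sparseSet n s) :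
    limitingNormal (sparseSet n s) x
      = {v : E n | (∀ i ∈ supp x, v i = 0) ∧ l0 v ≤ n - s} := by
  ext v
  constructor
  · rintro ⟨xk, vk, hxkS, hxk, hvk, hvkt⟩
    constructor
    · intro i hi
      have hxi : x i ≠ 0 := mem_supp.mp hi
      have hcoord := tendsto_coord hxk i
      have hev : ∀ᶠ k in atTop, xk k i ≠ 0 :=
        hcoord.eventually_ne hxi
      have hev0 : ∀ᶠ k in atTop, vk k i = 0 := by
        filter_upwards [hev] with k hk
        exact frechet_coord_zero (hxkS k) (hvk k) (Or.inl (mem_supp.mpr hk))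
      have hlim : Tendsto (fun k => vk k i) atTop (𝓝 (v i)) := tendsto_coord hvkt i
      have hzero : Tendsto (fun k => vk k i) atTop (𝓝 (0:ℝ)) :=
        tendsto_const_nhds.congr' (by filter_upwards [hev0] with k hk; exact hk.symm)
      exact tendsto_nhds_unique hlim hzero
    · -- l0 v ≤ n - s
      have hbound : ∀ k, l0 (vk k) ≤ n - s := fun k =>
        frechet_l0_le hs (hxkS k) (hvk k)
      have hev : ∀ᶠ k in atTop, ∀ i ∈ supp v, vk k i ≠ 0 := by
        rw [Filter.eventually_all_finset]
        intro i hi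
        exact (tendsto_coord hvkt i).eventually_ne (mem_supp.mp hi)
      obtain ⟨k, hk⟩ := hev.exists
      have hsub : supp v ⊆ supp (vk k) := fun i hi => mem_supp.mpr (hk i hi)
      exact le_trans (Finset.card_le_card hsub) (hbound k)
  · rintro ⟨hv1, hv2⟩
    -- choose I with supp x ⊆ I ⊆ (supp v)ᶜ, |I| = s
    have hsuppx : supp x ⊆ (supp v)ᶜ := by
      intro i hi
      rw [Finset.mem_compl, mem_supp]
      simpa using hv1 i hi
    have hcard1 : (supp x).card ≤ s := hx
    have hcard2 : s ≤ (supp v)ᶜ.card := by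
      have hlv : (supp v).card ≤ n - s := hv2
      rw [Finset.card_compl, Fintype.card_fin]
      omega
    obtain ⟨I, hxI, hIc, hIcard⟩ := Finset.exists_subsuperset_card_eq hsuppx hcard1 hcard2
    -- u : indicator of I \ supp x
    set u : E n := (WithLp.equiv 2 (Fin n → ℝ)).symm
      (fun i => if i ∈ I \ supp x then (1:ℝ) else 0) with hu
    have hu_apply : ∀ i, u i = if i ∈ I \ supp x then (1:ℝ) else 0 := fun i => rfl
    set xk : ℕ → E n := fun k => x + ((1:ℝ)/(k+1)) • u with hxk
    have hsuppk : ∀ k i, i ∈ I ↔ xk k i ≠ 0 := by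
      intro k i
      have hk : (0:ℝ) < 1/(k+1) := by positivity
      constructor
      · intro hi
        by_cases hix : i ∈ supp x
        · have : u i = 0 := by rw [hu_apply]; simp [hix]
          simp [hxk, PiLp.add_apply, PiLp.smul_apply, this, mem_supp.mp hix]
        · have : u i = 1 := by rw [hu_apply]; simp [Finset.mem_sdiff, hi, hix]
          have hxi : x i = 0 := by
            by_contra h; exact hix (mem_supp.mpr h)
          simp only [hxk, PiLp.add_apply, PiLp.smul_apply, this, hxi, smul_eq_mul, mul_one,
            zero_add]
          exact ne_of_gt hk
      · intro hne
        by_contra hiI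
        apply hne
        have hix : i ∉ supp x := fun h => hiI (hxI h)
        have hxi : x i = 0 := by by_contra h; exact hix (mem_supp.mpr h)
        have : u i = 0 := by rw [hu_apply]; simp [Finset.mem_sdiff, hiI]
        simp [hxk, PiLp.add_apply, PiLp.smul_apply, this, hxi]
    have hvI : ∀ i ∈ I, v i = 0 := by
      intro i hi
      have := hIc hi
      rw [Finset.mem_compl, mem_supp, not_not] at this
      exact this
    refine ⟨xk, fun _ => v, ?_, ?_, ?_, tendsto_const_nhds⟩
    · intro k
      show l0 (xk k) ≤ s
      have : supp (xk k) = I := by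
        ext i; rw [mem_supp]; exact (hsuppk k i).symm
      rw [l0, this, hIcard]
    · rw [hxk]
      have h1 : Tendsto (fun k : ℕ => ((1:ℝ)/(k+1)) • u) atTop (𝓝 ((0:ℝ) • u)) := by
        apply Tendsto.smul_const
        exact_mod_cast tendsto_one_div_add_atTop_nhds_zero_nat (𝕜 := ℝ)
      have h0 : Tendsto (fun _ : ℕ => x) atTop (𝓝 x) := tendsto_const_nhds
      have := h0.add h1
      simpa using this
    · intro k
      exact frechet_of_supp_eq hIcard (hsuppk k) hvI
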